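/- arXiv:1801.05423 — 4 statements merged into one kernel-verified Lean document; each statement's English description precedes it below -/
import Mathlib

section
/- With p_n, q_n as above, for all n ≥ 1 we have 0 < p_n/q_n - √2 < 1/(2√2 · q_n^2). -/
theorem stmt_5 (p q : ℕ → ℕ) (hp0 : p 0 = 1) (hq0 : q 0 = 1)
    (hp : ∀ n, p (n + 1) = (p n) ^ 2 + 2 * (q n) ^ 2)
    (hq : ∀ n, q (n + 1) = 2 * (p n) * (q n)) :
    ∀ n, 1 ≤ n →
      0 < (p n : ℝ) / (q n : ℝ) - Real.sqrt 2 ∧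
        (p n : ℝ) / (q n : ℝ) - Real.sqrt 2 < 1 / (2 * Real.sqrt 2 * (q n : ℝ) ^ 2) := by
  have hpos : ∀ n, 1 ≤ p n ∧ 1 ≤ q n := by
    intro n
    induction n with
    | zero => simp [hp0, hq0]
    | succ n ih =>
      rw [hp, hq]
      constructor <;> nlinarith [ih.1, ih.2]
  have hkey : ∀ n, 1 ≤ n → (p n) ^ 2 = 2 * (q n) ^ 2 + 1 := by
    intro n hn
    induction n with
    | zero => omega
    | succ n ih =>
      rcases Nat.eq_zero_or_pos n with h | h
      · subst h; rw [hp, hq, hp0, hq0]; norm_num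
      · have h2 := ih h
        rw [hp, hq]; nlinarith
  intro n hn
  have hP : (1 : ℝ) ≤ (p n : ℝ) := by exact_mod_cast (hpos n).1
  have hQ : (1 : ℝ) ≤ (q n : ℝ) := by exact_mod_cast (hpos n).2
  have hPQ : (p n : ℝ) ^ 2 = 2 * (q n : ℝ) ^ 2 + 1 := by exact_mod_cast hkey n hn
  have hs : Real.sqrt 2 ^ 2 = 2 := Real.sq_sqrt (by norm_num)
  have hs0 : (0 : ℝ) < Real.sqrt 2 := Real.sqrt_pos.mpr (by norm_num)
  have hQ0 : (0 : ℝ) < (q n : ℝ) := by linarith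
  have hgt : Real.sqrt 2 * (q n : ℝ) < (p n : ℝ) := by nlinarith
  have heq : (p n : ℝ) / (q n : ℝ) - Real.sqrt 2
      = ((p n : ℝ) - Real.sqrt 2 * (q n : ℝ)) / (q n : ℝ) := by
    field_simp
  constructor
  · rw [heq]
    exact div_pos (by linarith) hQ0
  · rw [heq, div_lt_div_iff₀ hQ0 (by positivity)]
    have h2 : ((p n : ℝ) - Real.sqrt 2 * (q n : ℝ)) * (2 * Real.sqrt 2 * (q n : ℝ) ^ 2)
        = (q n : ℝ) - ((p n : ℝ) - Real.sqrt 2 * (q n : ℝ)) ^ 2 * (q n : ℝ) := by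
      linear_combination (q n : ℝ) * hPQ - (q n : ℝ) ^ 3 * hs
    have hd : (0 : ℝ) < (p n : ℝ) - Real.sqrt 2 * (q n : ℝ) := by linarith
    nlinarith [mul_pos (mul_pos hd hd) hQ0]
end

section
/- Define the finite continued fraction c_k = 1 + [2, 2, ..., 2] with k twos, i.e., c_0 = 1 and c_{k+1} = 1 + 1/(1 + c_k). Then the Newton iterate x_n (with x_0 = 1, x_{n+1} = (x_n + 2/x_n)/2, over ℚ) equals c_{2^n - 1} for all n. -/
lemma newton_alg (a : ℚ) (ha : 1 ≤ a) :
    1 + 1 / (1 + (1 + 1 / (1 + (a + 2 / a) / 2))) =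
      ((1 + 1 / (1 + a)) + 2 / (1 + 1 / (1 + a))) / 2 := by
  have h0 : 0 < a := lt_of_lt_of_le one_pos ha
  have h1 : (0:ℚ) < 1 + a := by linarith
  have hN : (0:ℚ) < (a + 2 / a) / 2 := by positivity
  have h2 : (0:ℚ) < 1 + (a + 2 / a) / 2 := by linarith
  have h3 : (0:ℚ) < 1 + (1 + 1 / (1 + (a + 2 / a) / 2)) := by positivity
  have h4 : (0:ℚ) < 1 + 1 / (1 + a) := by positivity
  field_simp
  ring

theorem stmt_8 (c : ℕ → ℚ) (hc0 : c 0 = 1)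
    (hc : ∀ k, c (k + 1) = 1 + 1 / (1 + c k))
    (x : ℕ → ℚ) (hx0 : x 0 = 1)
    (hx : ∀ n, x (n + 1) = (x n + 2 / x n) / 2) :
    ∀ n, x n = c (2 ^ n - 1) := by
  have hpos : ∀ k, 1 ≤ c k := by
    intro k
    induction k with
    | zero => simp [hc0]
    | succ k ih =>
      rw [hc]
      have : (0:ℚ) < 1 / (1 + c k) := by positivity
      linarith
  have key : ∀ k, c (2 * k + 1) = (c k + 2 / c k) / 2 := by
    intro k
    induction k with
    | zero => rw [hc, hc0]; norm_num
    | succ k ih =>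
      have h1 : 2 * (k + 1) + 1 = (2 * k + 1) + 1 + 1 := by ring
      rw [h1, hc, hc, ih, hc k]
      exact newton_alg (c k) (hpos k)
  intro n
  induction n with
  | zero => simpa using hx0.trans hc0.symm
  | succ n ih =>
    have h2 : 2 ^ (n + 1) - 1 = 2 * (2 ^ n - 1) + 1 := by
      have : 1 ≤ 2 ^ n := Nat.one_le_two_pow
      omega
    rw [hx, ih, h2, key]
end

section
/- If a real number x ∈ (0,1) has a purely periodic orbit of period 2 under the Gauss map G(x) = frac(1/x), with G(x) ≠ x, then x is a quadratic irrational: it satisfies a quadratic equation with integer coefficients and is irrational. -/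
theorem stmt_10 (G : ℝ → ℝ) (hG : ∀ y : ℝ, G y = 1 / y - ⌊1 / y⌋)
    (x : ℝ) (hx : x ∈ Set.Ioo (0 : ℝ) 1) (hGx : G x ∈ Set.Ioo (0 : ℝ) 1)
    (hper : G (G x) = x) (hne : G x ≠ x) :
    (∃ a b c : ℤ, a ≠ 0 ∧ (a : ℝ) * x ^ 2 + (b : ℝ) * x + (c : ℝ) = 0) ∧
      Irrational x := by
  obtain ⟨hx0, hx1⟩ := hx
  obtain ⟨hy0, hy1⟩ := hGx
  set y := G x with hy
  set m : ℤ := ⌊1/x⌋ with hm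
  set n : ℤ := ⌊1/y⌋ with hn
  have hym : y = 1/x - m := hG x
  have hxn : x = 1/y - n := by rw [← hper]; exact hG y
  have hxne : x ≠ 0 := ne_of_gt hx0
  have hyne : y ≠ 0 := ne_of_gt hy0
  have hm1 : (1:ℤ) ≤ m := Int.le_floor.2 (by
    push_cast
    rw [le_div_iff₀ hx0]; linarith)
  have hn1 : (1:ℤ) ≤ n := Int.le_floor.2 (by
    push_cast
    rw [le_div_iff₀ hy0]; linarith)
  have eq1 : x * y = 1 - m * x := by
    have := hym
    field_simp at this
    nlinarith [this]
  have eq2 : y * x = 1 - n * y := by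
    have := hxn
    field_simp at this
    nlinarith [this]
  have key : (m:ℝ) * x^2 + ((m*n : ℤ):ℝ) * x + ((-n : ℤ):ℝ) = 0 := by
    push_cast
    linear_combination (x + n) * eq1 - x * eq2
  have hmR : (1:ℝ) ≤ (m:ℝ) := by exact_mod_cast hm1
  have hnR : (1:ℝ) ≤ (n:ℝ) := by exact_mod_cast hn1
  refine ⟨⟨m, m*n, -n, by omega, key⟩, ?_⟩
  -- irrationality
  set s : ℤ := m*n*(m*n+4) with hs
  have key' : (m:ℝ) * x^2 + (m:ℝ)*(n:ℝ) * x - (n:ℝ) = 0 := by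
    have := key; push_cast at this; linarith
  have hsq : (2*m*x + m*n)^2 = (s:ℝ) := by
    rw [hs]
    push_cast
    linear_combination (4*(m:ℝ)) * key'
  have hpos : 0 ≤ 2*(m:ℝ)*x + m*n := by nlinarith
  have hsqrt : Real.sqrt s = 2*m*x + m*n := by
    rw [show (s:ℝ) = (2*m*x+m*n)^2 from hsq.symm, Real.sqrt_sq hpos]
  have hsnn : (0:ℝ) ≤ (s:ℝ) := by rw [← hsq]; positivity
  have hirr : Irrational (Real.sqrt s) := by
    apply irrational_nrt_of_notint_nrt 2 s
    · rw [Real.sq_sqrt hsnn]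
    · rintro ⟨t, ht⟩
      have htnn : (0:ℝ) ≤ (t:ℝ) := ht ▸ Real.sqrt_nonneg _
      have ht0 : (0:ℤ) ≤ t := by exact_mod_cast htnn
      have htsq : t^2 = s := by
        have : ((t:ℝ))^2 = (s:ℝ) := by rw [← ht, Real.sq_sqrt hsnn]
        exact_mod_cast this
      have hk : (1:ℤ) ≤ m*n := by nlinarith
      rcases le_or_gt t (m*n+1) with h | h
      · nlinarith
      · nlinarith
    · norm_num
  rintro ⟨q, hq⟩
  apply hirr
  exact ⟨2*m*q + m*n, by push_cast [hq]; linarith [hsqrt]⟩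
end

section
/- Suppose B is a formal power series with constant coefficient 1 satisfying the functional equation B(v + v^2)·(1+v)^2 = (1+2v)·B(v) (as formal power series, where B(v+v^2) denotes composition). Then the coefficients c_n of B satisfy c_0 = 1 and n·c_n = -∑_{i=1}^{n} C(n-i+2, i+1)·c_{n-i} for n ≥ 1; in particular c_1 = -1, c_2 = 3/2, c_3 = -8/3. -/
open PowerSeries

/-- The formal power series `B(v + v^2)`: since `(v + v^2)^k = v^k (1+v)^k`, the
coefficient of `v^n` in `B(v + v^2)` is `∑_{k ≤ n} c_k · C(k, n-k)`, where `c_k`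
is the `k`-th coefficient of `B`.  This is the substitution of `v + v^2` into `B`,
well-defined because `v + v^2` has zero constant term. -/
noncomputable def substVplusVsq (B : PowerSeries ℚ) : PowerSeries ℚ :=
  PowerSeries.mk fun n =>
    ∑ k ∈ Finset.range (n + 1), (PowerSeries.coeff k B) * (Nat.choose k (n - k) : ℚ)

lemma pascal2 (k j : ℕ) :
    (k + 2).choose (j + 2) = k.choose (j + 2) + 2 * k.choose (j + 1) + k.choose j := by
  simp [Nat.choose_succ_succ]
  ring

lemma sum_id (c : ℕ → ℚ) (n : ℕ) :
    (∑ k ∈ Finset.range (n+2), c k * ((k.choose (n+1-k) : ℕ) : ℚ))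
      + 2 * (∑ k ∈ Finset.range (n+1), c k * ((k.choose (n-k) : ℕ) : ℚ))
      + (∑ k ∈ Finset.range n, c k * ((k.choose (n-1-k) : ℕ) : ℚ))
    = (∑ k ∈ Finset.range n, c k * (((k+2).choose (n+1-k) : ℕ) : ℚ))
        + c (n+1) + ((n : ℚ)+2) * c n := by
  rw [Finset.sum_range_succ (n := n+1), Finset.sum_range_succ (n := n),
    Finset.sum_range_succ (f := fun k => c k * ((k.choose (n-k) : ℕ) : ℚ)) (n := n)]
  have h1 : n + 1 - (n+1) = 0 := by omega
  have h2 : n + 1 - n = 1 := by omega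
  have h3 : n - n = 0 := by omega
  rw [h1, h2, h3]
  simp only [Nat.choose_zero_right, Nat.choose_one_right]
  have key : ∀ k ∈ Finset.range n,
      c k * ((k.choose (n+1-k) : ℕ) : ℚ) + 2 * (c k * ((k.choose (n-k) : ℕ) : ℚ))
        + c k * ((k.choose (n-1-k) : ℕ) : ℚ)
      = c k * (((k+2).choose (n+1-k) : ℕ) : ℚ) := by
    intro k hk
    rw [Finset.mem_range] at hk
    obtain ⟨j, hj⟩ : ∃ j, n - 1 - k = j := ⟨_, rfl⟩
    have e1 : n + 1 - k = j + 2 := by omega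
    have e2 : n - k = j + 1 := by omega
    rw [hj, e1, e2, pascal2]
    push_cast
    ring
  have h := Finset.sum_congr rfl key
  rw [Finset.sum_add_distrib, Finset.sum_add_distrib, ← Finset.mul_sum] at h
  push_cast
  linarith [h]

theorem stmt_13 (B : PowerSeries ℚ) (hB0 : PowerSeries.coeff 0 B = 1)
    (hfun : substVplusVsq B * (1 + PowerSeries.X) ^ 2
        = (1 + 2 * PowerSeries.X) * B) :
    (PowerSeries.coeff 0 B = 1 ∧
      ∀ n : ℕ, 1 ≤ n →
        (n : ℚ) * PowerSeries.coeff n B =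
          -∑ i ∈ Finset.Icc 1 n,
            (Nat.choose (n - i + 2) (i + 1) : ℚ) * PowerSeries.coeff (n - i) B) ∧
    PowerSeries.coeff 1 B = -1 ∧
    PowerSeries.coeff 2 B = 3 / 2 ∧
    PowerSeries.coeff 3 B = -8 / 3 := by
  set c : ℕ → ℚ := fun k => PowerSeries.coeff k B with hc
  set S : PowerSeries ℚ := substVplusVsq B with hS
  have hSc : ∀ m : ℕ, PowerSeries.coeff m S
      = ∑ k ∈ Finset.range (m + 1), c k * ((k.choose (m - k) : ℕ) : ℚ) := by
    intro m
    simp [hS, substVplusVsq, hc]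
  -- main recurrence in range form
  have hrec : ∀ n : ℕ, ((n : ℚ) + 1) * c (n+1)
      = -∑ k ∈ Finset.range (n+1), c k * (((k+2).choose (n+2-k) : ℕ) : ℚ) := by
    intro n
    have h := congrArg (PowerSeries.coeff (n+2)) hfun
    have el : S * (1 + PowerSeries.X) ^ 2 = S + S * X + S * X + S * X * X := by ring
    have er : (1 + 2 * PowerSeries.X) * B = B + B * X + B * X := by ring
    rw [el, er] at h
    simp only [map_add, PowerSeries.coeff_succ_mul_X] at h
    rw [hSc, hSc, hSc] at h
    have hid := sum_id c (n+1)
    have e1 : n + 2 - n = 2 := by omega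
    have e2 : n + 1 + 1 = n + 2 := by omega
    have e3 : n + 1 - 1 = n := by omega
    rw [e2, e3] at hid
    -- hid : a(n+2) + 2 a(n+1) + a(n) = Σ + c(n+2) + (n+3) c(n+1)
    push_cast at hid h ⊢
    linarith [hid, h]
  have recIcc : ∀ n : ℕ, 1 ≤ n →
      (n : ℚ) * c n =
        -∑ i ∈ Finset.Icc 1 n, ((n - i + 2).choose (i + 1) : ℚ) * c (n - i) := by
    intro n hn
    obtain ⟨m, rfl⟩ : ∃ m, n = m + 1 := ⟨n - 1, by omega⟩
    have h := hrec m
    have reidx : ∑ i ∈ Finset.Icc 1 (m+1), (((m+1) - i + 2).choose (i + 1) : ℚ) * c ((m+1) - i)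
        = ∑ k ∈ Finset.range (m+1), c k * (((k+2).choose (m+2-k) : ℕ) : ℚ) := by
      refine Finset.sum_nbij' (fun i => m + 1 - i) (fun k => m + 1 - k) ?_ ?_ ?_ ?_ ?_
      · intro i hi; simp only [Finset.mem_Icc] at hi; simp only [Finset.mem_range]; omega
      · intro k hk; simp only [Finset.mem_range] at hk; simp only [Finset.mem_Icc]; omega
      · intro i hi; simp only [Finset.mem_Icc] at hi
        show m + 1 - (m + 1 - i) = i; omega
      · intro k hk; simp only [Finset.mem_range] at hk
        show m + 1 - (m + 1 - k) = k; omega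
      · intro i hi
        simp only [Finset.mem_Icc] at hi
        have e : m + 2 - (m + 1 - i) = i + 1 := by omega
        rw [e, mul_comm]
    push_cast at h ⊢
    rw [reidx]
    convert h using 3 
  have hc0 : c 0 = 1 := hB0
  have h1 : c 1 = -1 := by
    have := recIcc 1 le_rfl
    simp [Finset.Icc_self, hc0] at this
    linarith
  have h2 : c 2 = 3/2 := by
    have := recIcc 2 (by norm_num)
    have hIcc : Finset.Icc 1 2 = {1, 2} := by decide
    rw [hIcc] at this
    simp [Finset.sum_insert, h1, hc0, Nat.choose] at this
    norm_num at this
    linarith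
  have h3 : c 3 = -8/3 := by
    have := recIcc 3 (by norm_num)
    have hIcc : Finset.Icc 1 3 = {1, 2, 3} := by decide
    rw [hIcc] at this
    simp [Finset.sum_insert, h1, h2, hc0, Nat.choose] at this
    norm_num at this
    linarith
  exact ⟨⟨hB0, recIcc⟩, h1, h2, h3⟩
end
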